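/- Let A be an associative unital ℂ-algebra, q ∈ ℂ nonzero, g ∈ ℂ, N ≥ 1, and for n = 1,…,N let uₙ, vₙ ∈ A be invertible with uₙ·vₙ = q²·vₙ·uₙ, with elements at distinct sites commuting. For z ∈ ℂ∖{0} let Lₙ(z) ∈ M₂(A) have entries Lₙ(z)₁₁ = z·1 − z⁻¹·vₙ, Lₙ(z)₁₂ = g·uₙ⁻¹, Lₙ(z)₂₁ = −g·q⁻¹·uₙ·vₙ, Lₙ(z)₂₂ = 0, and let A_N(z) = (L_N(z)·…·L₁(z))₁₁. Then there exist elements h₀, h₁, …, h_N ∈ A (the Hamiltonians of the N-particle open relativistic Toda chain) such that for every z ∈ ℂ∖{0}: A_N(z) = Σ_{k=0}^N (−1)^k·z^{N−2k}·h_k, with h₀ = 1, h_N = v_N·v_{N−1}·…·v₁, h₁ = Σ_{n=1}^{N−1} (1 + q⁻¹·g²·uₙ·u_{n+1}⁻¹)·vₙ + v_N, and h_{N−1} = v_N·…·v₁·( v₁⁻¹ + Σ_{n=2}^{N} (1 + q⁻¹·g²·u_{n−1}·uₙ⁻¹)·vₙ⁻¹ ). -/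

import Mathlib

/-- The quantum Lax matrix of the relativistic Toda chain, built from a Weyl
pair `u, v` (with `u·v = q²·v·u`) and coupling constant `g`. -/
noncomputable def laxMatrix {A : Type*} [Ring A] [Algebra ℂ A]
    (q g z : ℂ) (u v : Aˣ) : Matrix (Fin 2) (Fin 2) A :=
  !![z • (1 : A) - z⁻¹ • (v : A), g • (↑u⁻¹ : A);
     (-(g * q⁻¹)) • ((u : A) * (v : A)), 0]

section ToDaAux
variable {A : Type*} [Ring A] [Algebra ℂ A]

noncomputable def todaCoef (q g : ℂ) (u v : ℕ → Aˣ) : ℕ → (ℕ → A) × (ℕ → A)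
  | 0 => (fun k => if k = 0 then 1 else 0, fun _ => 0)
  | n + 1 =>
    let p := todaCoef q g u v n
    (fun k => match k with
      | 0 => p.1 0
      | k + 1 => p.1 (k + 1) + (v (n + 1) : A) * p.1 k
          - g • ((↑(u (n + 1))⁻¹ : A) * p.2 k),
     fun k => (-(g * q⁻¹)) • ((u (n + 1) : A) * ((v (n + 1) : A) * p.1 k)))

variable (q g : ℂ) (u v : ℕ → Aˣ)

lemma todaCoef_fst_zero_zero : (todaCoef q g u v 0).1 0 = 1 := rfl
lemma todaCoef_fst_zero (k : ℕ) : (todaCoef (A := A) q g u v 0).1 k = if k = 0 then 1 else 0 := rfl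
lemma todaCoef_snd_zero (k : ℕ) : (todaCoef (A := A) q g u v 0).2 k = 0 := rfl
lemma todaCoef_fst_succ_zero (n : ℕ) :
    (todaCoef q g u v (n+1)).1 0 = (todaCoef q g u v n).1 0 := rfl
lemma todaCoef_fst_succ_succ (n k : ℕ) :
    (todaCoef q g u v (n+1)).1 (k+1) = (todaCoef q g u v n).1 (k+1)
      + (v (n + 1) : A) * (todaCoef q g u v n).1 k
      - g • ((↑(u (n + 1))⁻¹ : A) * (todaCoef q g u v n).2 k) := rfl
lemma todaCoef_snd_succ (n k : ℕ) :
    (todaCoef q g u v (n+1)).2 k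
      = (-(g * q⁻¹)) • ((u (n + 1) : A) * ((v (n + 1) : A) * (todaCoef q g u v n).1 k)) := rfl

lemma todaCoef_a_zero (n : ℕ) : (todaCoef (A := A) q g u v n).1 0 = 1 := by
  induction n with
  | zero => rfl
  | succ n ih => rw [todaCoef_fst_succ_zero, ih]

lemma todaCoef_vanish (n : ℕ) :
    (∀ k, n < k → (todaCoef (A := A) q g u v n).1 k = 0) ∧
    (∀ k, n ≤ k → (todaCoef (A := A) q g u v n).2 k = 0) := by
  induction n with
  | zero =>
    refine ⟨fun k hk => ?_, fun k _ => rfl⟩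
    rw [todaCoef_fst_zero, if_neg (Nat.pos_iff_ne_zero.mp hk)]
  | succ n ih =>
    constructor
    · intro k hk
      match k, hk with
      | k + 1, hk =>
        have hk' : n < k := Nat.lt_of_succ_lt_succ hk
        rw [todaCoef_fst_succ_succ, ih.1 (k+1) (Nat.lt_succ_of_lt hk'), ih.1 k hk',
          ih.2 k hk'.le, mul_zero, mul_zero, smul_zero]
        simp
    · intro k hk
      rw [todaCoef_snd_succ, ih.1 k (Nat.lt_of_succ_le hk), mul_zero, mul_zero, smul_zero]

lemma scalS1 (z : ℂ) (hz : z ≠ 0) (n k : ℕ) :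
    z * ((-1:ℂ)^k * z ^ ((n:ℤ) - 2*k)) = (-1:ℂ)^k * z ^ (((n:ℤ)+1) - 2*(k:ℤ)) := by
  rw [show ((n:ℤ)+1) - 2*(k:ℤ) = ((n:ℤ) - 2*k) + 1 by ring, zpow_add₀ hz, zpow_one]; ring

lemma scalS2 (z : ℂ) (hz : z ≠ 0) (n k : ℕ) :
    -(z⁻¹ * ((-1:ℂ)^k * z ^ ((n:ℤ) - 2*k))) = (-1:ℂ)^(k+1) * z ^ (((n:ℤ)+1) - 2*((k:ℤ)+1)) := by
  rw [show ((n:ℤ)+1) - 2*((k:ℤ)+1) = ((n:ℤ) - 2*k) - 1 by ring, zpow_sub₀ hz ((n:ℤ)-2*k) 1, zpow_one,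
    pow_succ]
  field_simp

lemma scalS3 (z : ℂ) (n k : ℕ) :
    (-1:ℂ)^k * z ^ ((n:ℤ) - 1 - 2*k) = -((-1:ℂ)^(k+1) * z ^ (((n:ℤ)+1) - 2*((k:ℤ)+1))) := by
  rw [show ((n:ℤ)+1) - 2*((k:ℤ)+1) = (n:ℤ) - 1 - 2*k by ring, pow_succ]
  ring

lemma lax00 (z : ℂ) (u₀ v₀ : Aˣ) :
    laxMatrix (A := A) q g z u₀ v₀ 0 0 = z • (1 : A) - z⁻¹ • (v₀ : A) := rfl
lemma lax01 (z : ℂ) (u₀ v₀ : Aˣ) :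
    laxMatrix (A := A) q g z u₀ v₀ 0 1 = g • (↑u₀⁻¹ : A) := rfl
lemma lax10 (z : ℂ) (u₀ v₀ : Aˣ) :
    laxMatrix (A := A) q g z u₀ v₀ 1 0 = (-(g * q⁻¹)) • ((u₀ : A) * (v₀ : A)) := rfl
lemma lax11 (z : ℂ) (u₀ v₀ : Aˣ) :
    laxMatrix (A := A) q g z u₀ v₀ 1 1 = 0 := rfl

lemma prod_step (z : ℂ) (n : ℕ) :
    (((List.range (n+1)).map fun m => laxMatrix (A := A) q g z (u (m + 1)) (v (m + 1))).reverse).prod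
    = laxMatrix q g z (u (n + 1)) (v (n + 1)) *
      (((List.range n).map fun m => laxMatrix (A := A) q g z (u (m + 1)) (v (m + 1))).reverse).prod := by
  rw [List.range_succ, List.map_append, List.reverse_append]
  simp

lemma toda_gen (z : ℂ) (hz : z ≠ 0) (n : ℕ) :
    ((((List.range n).map fun m => laxMatrix (A := A) q g z (u (m + 1)) (v (m + 1))).reverse).prod 0 0
      = ∑ k ∈ Finset.range (n + 1),
          ((-1 : ℂ) ^ k * z ^ ((n : ℤ) - 2 * k)) • (todaCoef q g u v n).1 k)
    ∧ ((((List.range n).map fun m => laxMatrix (A := A) q g z (u (m + 1)) (v (m + 1))).reverse).prod 1 0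
      = ∑ k ∈ Finset.range n,
          ((-1 : ℂ) ^ k * z ^ ((n : ℤ) - 1 - 2 * k)) • (todaCoef q g u v n).2 k) := by
  induction n with
  | zero =>
    constructor
    · simp [Matrix.one_apply, todaCoef_fst_zero]
    · simp [Matrix.one_apply]
  | succ n ih =>
    obtain ⟨ih1, ih2⟩ := ih
    have hgoal2 :
        (((List.range (n+1)).map fun m =>
            laxMatrix (A := A) q g z (u (m + 1)) (v (m + 1))).reverse).prod 1 0
          = ∑ k ∈ Finset.range (n+1),
              ((-1 : ℂ) ^ k * z ^ (((n:ℤ)+1) - 1 - 2 * k)) • (todaCoef q g u v (n+1)).2 k := by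
      rw [prod_step, Matrix.mul_apply, Fin.sum_univ_two, lax10, lax11, zero_mul, add_zero,
        ih1, smul_mul_assoc, Finset.mul_sum, Finset.smul_sum]
      refine Finset.sum_congr rfl fun k _ => ?_
      rw [todaCoef_snd_succ]
      rw [show ((n:ℤ)+1) - 1 - 2*(k:ℤ) = (n:ℤ) - 2*k by ring]
      rw [mul_smul_comm, mul_assoc, smul_comm]
    constructor
    swap
    · rw [hgoal2]; push_cast; rfl
    · rw [prod_step, Matrix.mul_apply, Fin.sum_univ_two, lax00, lax01, ih1, ih2,
        sub_mul, smul_mul_assoc, one_mul, smul_mul_assoc, smul_mul_assoc]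
      rw [Finset.smul_sum, Finset.mul_sum, Finset.smul_sum, Finset.mul_sum, Finset.smul_sum]
      push_cast
      -- term 1 : z-shifted sum
      have h1 : ∀ k ∈ Finset.range (n+1),
          z • (((-1:ℂ)^k * z ^ ((n:ℤ) - 2*k)) • (todaCoef q g u v n).1 k)
          = ((-1:ℂ)^k * z ^ (((n:ℤ)+1) - 2*(k:ℤ))) • (todaCoef q g u v n).1 k := by
        intro k _
        rw [smul_smul, scalS1 z hz]
      have e2 : ∀ k ∈ Finset.range (n + 1),
          z⁻¹ • (((v (n + 1)) : A) * ((-1:ℂ) ^ k * z ^ ((n:ℤ) - 2 * k)) • (todaCoef q g u v n).1 k)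
          = -(((-1:ℂ) ^ (k+1) * z ^ ((n:ℤ) + 1 - 2 * ((k:ℤ) + 1))) •
              (((v (n + 1)) : A) * (todaCoef q g u v n).1 k)) := by
        intro k _
        rw [mul_smul_comm, smul_smul, ← neg_smul, ← scalS2 z hz, neg_neg]
      have e3 : ∀ k ∈ Finset.range n,
          g • ((↑(u (n + 1))⁻¹ : A) * ((-1:ℂ) ^ k * z ^ ((n:ℤ) - 1 - 2 * k)) • (todaCoef q g u v n).2 k)
          = -(((-1:ℂ) ^ (k+1) * z ^ ((n:ℤ) + 1 - 2 * ((k:ℤ) + 1))) •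
              (g • ((↑(u (n + 1))⁻¹ : A) * (todaCoef q g u v n).2 k))) := by
        intro k _
        rw [mul_smul_comm, smul_comm, scalS3 z n k, neg_smul]
      rw [Finset.sum_congr rfl h1, Finset.sum_congr rfl e2, Finset.sum_congr rfl e3]
      conv_rhs => rw [Finset.sum_range_succ']
      simp only [todaCoef_fst_succ_succ, todaCoef_fst_succ_zero]
      push_cast
      simp only [smul_sub, smul_add]
      rw [Finset.sum_sub_distrib, Finset.sum_add_distrib]
      have hp1 : (∑ x ∈ Finset.range (n + 1),
            ((-1:ℂ) ^ (x + 1) * z ^ ((n:ℤ) + 1 - 2 * ((x:ℤ) + 1))) • (todaCoef q g u v n).1 (x + 1))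
          = ∑ x ∈ Finset.range n,
            ((-1:ℂ) ^ (x + 1) * z ^ ((n:ℤ) + 1 - 2 * ((x:ℤ) + 1))) • (todaCoef q g u v n).1 (x + 1) := by
        rw [Finset.sum_range_succ, (todaCoef_vanish q g u v n).1 (n+1) (Nat.lt_succ_self n),
          smul_zero, add_zero]
      have hp3 : (∑ x ∈ Finset.range (n + 1),
            ((-1:ℂ) ^ (x + 1) * z ^ ((n:ℤ) + 1 - 2 * ((x:ℤ) + 1))) •
              g • ((↑(u (n + 1))⁻¹ : A) * (todaCoef q g u v n).2 x))
          = ∑ x ∈ Finset.range n,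
            ((-1:ℂ) ^ (x + 1) * z ^ ((n:ℤ) + 1 - 2 * ((x:ℤ) + 1))) •
              g • ((↑(u (n + 1))⁻¹ : A) * (todaCoef q g u v n).2 x) := by
        rw [Finset.sum_range_succ, (todaCoef_vanish q g u v n).2 n le_rfl,
          mul_zero, smul_zero, smul_zero, add_zero]
      have hLHS1 : (∑ x ∈ Finset.range (n + 1),
            ((-1:ℂ) ^ x * z ^ ((n:ℤ) + 1 - 2 * (x:ℤ))) • (todaCoef q g u v n).1 x)
          = (∑ x ∈ Finset.range n,
            ((-1:ℂ) ^ (x + 1) * z ^ ((n:ℤ) + 1 - 2 * ((x:ℤ) + 1))) • (todaCoef q g u v n).1 (x + 1))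
            + ((-1:ℂ) ^ 0 * z ^ ((n:ℤ) + 1 - 0)) • (todaCoef q g u v n).1 0 := by
        rw [Finset.sum_range_succ']
        push_cast
        rfl
      rw [hp1, hp3, hLHS1, Finset.sum_neg_distrib, Finset.sum_neg_distrib]
      abel

noncomputable def prodV (v : ℕ → Aˣ) (n : ℕ) : A :=
  (((List.range n).map fun m => (v (m + 1) : A)).reverse).prod

lemma prodV_zero : prodV (A := A) v 0 = 1 := rfl

lemma prodV_succ (n : ℕ) : prodV (A := A) v (n + 1) = (v (n + 1) : A) * prodV v n := by
  unfold prodV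
  rw [List.range_succ, List.map_append, List.reverse_append]
  simp

lemma a_top (n : ℕ) : (todaCoef q g u v n).1 n = prodV v n := by
  induction n with
  | zero => rfl
  | succ n ih =>
    rw [todaCoef_fst_succ_succ, (todaCoef_vanish q g u v n).1 (n+1) (Nat.lt_succ_self n),
      (todaCoef_vanish q g u v n).2 n le_rfl, mul_zero, smul_zero, sub_zero, zero_add,
      ih, prodV_succ]

lemma commute_prodV (x : A) (n : ℕ) (hx : ∀ m, 1 ≤ m → m ≤ n → Commute x (v m : A)) :
    Commute x (prodV v n) := by
  induction n with
  | zero => rw [prodV_zero]; exact Commute.one_right x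
  | succ n ih =>
    rw [prodV_succ]
    exact (hx (n+1) (Nat.succ_le_succ (Nat.zero_le n)) le_rfl).mul_right
      (ih fun m h1 h2 => hx m h1 (h2.trans (Nat.le_succ n)))

lemma weyl_vu (hq : q ≠ 0) {u₀ v₀ : Aˣ} (hW : (u₀:A)*(v₀:A) = q^2 • ((v₀:A)*(u₀:A))) :
    (v₀:A)*(u₀:A) = (q^2)⁻¹ • ((u₀:A)*(v₀:A)) := by
  rw [hW, smul_smul, inv_mul_cancel₀ (pow_ne_zero 2 hq), one_smul]

lemma weyl_vuinv {u₀ v₀ : Aˣ} (hW : (u₀:A)*(v₀:A) = q^2 • ((v₀:A)*(u₀:A))) :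
    (v₀:A)*(↑u₀⁻¹:A) = q^2 • ((↑u₀⁻¹:A)*(v₀:A)) := by
  have h : (↑u₀⁻¹:A) * (((u₀:A)*(v₀:A)) * ↑u₀⁻¹) = ↑u₀⁻¹ * ((q^2 • ((v₀:A)*(u₀:A))) * ↑u₀⁻¹) := by
    rw [hW]
  rw [← mul_assoc, ← mul_assoc, Units.inv_mul, one_mul] at h
  rw [smul_mul_assoc, mul_smul_comm, mul_assoc, Units.mul_inv, mul_one] at h
  exact h

lemma weyl_invinv {u₀ v₀ : Aˣ} (hW : (u₀:A)*(v₀:A) = q^2 • ((v₀:A)*(u₀:A))) :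
    (↑u₀⁻¹:A)*(↑v₀⁻¹:A) = q^2 • ((↑v₀⁻¹:A)*(↑u₀⁻¹:A)) := by
  have h := weyl_vuinv (A := A) q hW
  have h2 : (↑v₀⁻¹:A) * (((v₀:A)*(↑u₀⁻¹:A)) * ↑v₀⁻¹) = ↑v₀⁻¹ * ((q^2 • ((↑u₀⁻¹:A)*(v₀:A))) * ↑v₀⁻¹) := by
    rw [h]
  rw [← mul_assoc, ← mul_assoc, Units.inv_mul, one_mul] at h2
  rw [smul_mul_assoc, mul_smul_comm, mul_assoc, Units.mul_inv, mul_one] at h2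
  exact h2

lemma a_one (hq : q ≠ 0) (N : ℕ)
    (huu : ∀ n m, 1 ≤ n → n ≤ N → 1 ≤ m → m ≤ N → n ≠ m →
      (u n : A) * (u m : A) = (u m : A) * (u n : A))
    (n : ℕ) (hn : n + 1 ≤ N) :
    (todaCoef q g u v (n+1)).1 1
      = (∑ m ∈ Finset.range n,
          (1 + (q⁻¹ * g ^ 2) • ((u (m + 1) : A) * (↑(u (m + 2))⁻¹ : A))) * (v (m + 1) : A))
        + (v (n + 1) : A) := by
  induction n with
  | zero =>
    rw [todaCoef_fst_succ_succ]
    simp [todaCoef_fst_zero, todaCoef_snd_zero]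
  | succ n ih =>
    have hn' : n + 1 ≤ N := Nat.le_of_succ_le hn
    rw [todaCoef_fst_succ_succ, ih hn', todaCoef_a_zero, todaCoef_snd_succ, todaCoef_a_zero,
      mul_one]
    have hcomm : (↑(u (n + 2))⁻¹ : A) * ((u (n + 1) : A) * (v (n + 1) : A))
        = ((u (n + 1) : A) * (↑(u (n + 2))⁻¹ : A)) * (v (n + 1) : A) := by
      have hc : Commute ((u (n + 1) : A)) ((u (n + 2) : A)) :=
        huu (n+1) (n+2) (Nat.succ_le_succ (Nat.zero_le n)) hn'
          (Nat.succ_le_succ (Nat.zero_le (n+1))) hn (by omega)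
      rw [← mul_assoc, (hc.units_inv_right).symm.eq]
    simp only [show n+1+1 = n+2 from rfl, mul_one]
    rw [mul_smul_comm, smul_smul, hcomm, Finset.sum_range_succ]
    rw [add_mul, one_mul, smul_mul_assoc]
    rw [show (g * -(g * q⁻¹)) = -(q⁻¹ * g ^ 2) by ring, neg_smul, sub_neg_eq_add]
    abel

lemma weyl_vu_left (hq : q ≠ 0) {u₀ v₀ : Aˣ}
    (hW : (u₀:A)*(v₀:A) = q^2 • ((v₀:A)*(u₀:A))) (y : A) :
    (v₀:A)*((u₀:A)*y) = (q^2)⁻¹ • ((u₀:A)*((v₀:A)*y)) := by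
  rw [← mul_assoc, weyl_vu q hq hW, smul_mul_assoc, mul_assoc]

lemma a_topm1 (hq : q ≠ 0) (N : ℕ)
    (hWeyl : ∀ n, 1 ≤ n → n ≤ N →
      (u n : A) * (v n : A) = q ^ 2 • ((v n : A) * (u n : A)))
    (huu : ∀ n m, 1 ≤ n → n ≤ N → 1 ≤ m → m ≤ N → n ≠ m →
      (u n : A) * (u m : A) = (u m : A) * (u n : A))
    (huv : ∀ n m, 1 ≤ n → n ≤ N → 1 ≤ m → m ≤ N → n ≠ m →
      (u n : A) * (v m : A) = (v m : A) * (u n : A))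
    (hvv : ∀ n m, 1 ≤ n → n ≤ N → 1 ≤ m → m ≤ N → n ≠ m →
      (v n : A) * (v m : A) = (v m : A) * (v n : A))
    (n : ℕ) (hn : n + 1 ≤ N) :
    (todaCoef q g u v (n+1)).1 n
      = prodV v (n+1) * ((↑(v 1)⁻¹ : A) + ∑ m ∈ Finset.range n,
          (1 + (q⁻¹ * g ^ 2) • ((u (m + 1) : A) * (↑(u (m + 2))⁻¹ : A))) * (↑(v (m + 2))⁻¹ : A)) := by
  induction n with
  | zero =>
    rw [todaCoef_a_zero]
    simp [prodV_succ, prodV_zero]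
  | succ n ih =>
    have hn' : n + 1 ≤ N := Nat.le_of_succ_le hn
    have cPu1 : Commute (prodV v n) ((u (n+1) : A)) :=
      (commute_prodV v _ n fun m h1 h2 =>
        (huv (n+1) m (by omega) hn' h1 (by omega) (by omega))).symm
    have cPu2' : Commute (↑(u (n+2))⁻¹ : A) (prodV v n) :=
      commute_prodV v _ n fun m h1 h2 =>
        Commute.units_inv_left (huv (n+2) m (by omega) hn h1 (by omega) (by omega))
    have cPv2inv : Commute (↑(v (n+2))⁻¹ : A) (prodV v (n+1)) :=
      commute_prodV v _ (n+1) fun m h1 h2 =>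
        Commute.units_inv_left (hvv (n+2) m (by omega) hn h1 (by omega) (by omega))
    have cu1v2inv : Commute ((u (n+1) : A)) (↑(v (n+2))⁻¹ : A) :=
      Commute.units_inv_right (huv (n+1) (n+2) (by omega) hn' (by omega) hn (by omega))
    have cu1u2inv : Commute ((u (n+1) : A)) (↑(u (n+2))⁻¹ : A) :=
      Commute.units_inv_right (huu (n+1) (n+2) (by omega) hn' (by omega) hn (by omega))
    have cv1u2inv : Commute ((v (n+1) : A)) (↑(u (n+2))⁻¹ : A) :=
      Commute.units_inv_right ((huv (n+2) (n+1) (by omega) hn (by omega) hn' (by omega)).symm)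
    rw [todaCoef_fst_succ_succ, a_top, ih hn', todaCoef_snd_succ, a_top]
    simp only [show n+1+1 = n+2 from rfl]
    rw [mul_smul_comm, smul_smul,
      show g * -(g * q⁻¹) = -(q⁻¹ * g^2) by ring, neg_smul, sub_neg_eq_add]
    rw [Finset.sum_range_succ, ← add_assoc (↑(v 1)⁻¹ : A), prodV_succ v (n+1)]
    conv_rhs => rw [mul_assoc, mul_add, mul_add]
    have key : prodV v (n+1) + (q⁻¹ * g^2) •
          ((↑(u (n+2))⁻¹ : A) * ((u (n+1) : A) * ((v (n+1) : A) * prodV v n)))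
        = (v (n+2) : A) * (prodV v (n+1) *
            ((1 + (q⁻¹ * g ^ 2) • ((u (n+1) : A) * (↑(u (n+2))⁻¹ : A))) * (↑(v (n+2))⁻¹ : A))) := by
      rw [add_mul, one_mul, smul_mul_assoc, mul_add, mul_add]
      rw [← cPv2inv.eq, Units.mul_inv_cancel_left]
      rw [mul_smul_comm, mul_smul_comm]
      rw [mul_assoc ((u (n+1) : A))]
      rw [weyl_invinv q (hWeyl (n+2) (by omega) hn)]
      rw [mul_smul_comm, mul_smul_comm, mul_smul_comm, smul_smul]
      rw [cu1v2inv.left_comm, cPv2inv.symm.left_comm, Units.mul_inv_cancel_left]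
      rw [prodV_succ v n, mul_assoc ((v (n+1)) : A) (prodV v n)]
      rw [cPu1.left_comm, ← cPu2'.eq]
      rw [weyl_vu_left q hq (hWeyl (n+1) (by omega) hn'), smul_smul]
      rw [cv1u2inv.left_comm, cu1u2inv.left_comm]
      rw [add_right_inj]
      congr 1
      field_simp
    rw [← key]
    abel

end ToDaAux

/-- The `(1,1)` entry `A_N(z)` of the monodromy matrix `T_N(z) = L_N(z)·…·L₁(z)`
is the generating function of the Hamiltonians `h₀, …, h_N` of the `N`-particle
open relativistic Toda chain: `A_N(z) = Σ_{k=0}^N (−1)^k·z^{N−2k}·h_k`, with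
`h₀ = 1`, `h_N = v_N·…·v₁`,
`h₁ = Σ_{n=1}^{N−1} (1 + q⁻¹g²·uₙu_{n+1}⁻¹)·vₙ + v_N`, and
`h_{N−1} = v_N·…·v₁·(v₁⁻¹ + Σ_{n=2}^N (1 + q⁻¹g²·u_{n−1}uₙ⁻¹)·vₙ⁻¹)`. -/

theorem open_toda_generating_function (A : Type*) [Ring A] [Algebra ℂ A]
    (q g : ℂ) (hq : q ≠ 0) (N : ℕ) (hN : 1 ≤ N) (u v : ℕ → Aˣ)
    (hWeyl : ∀ n, 1 ≤ n → n ≤ N →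
      (u n : A) * (v n : A) = q ^ 2 • ((v n : A) * (u n : A)))
    (huu : ∀ n m, 1 ≤ n → n ≤ N → 1 ≤ m → m ≤ N → n ≠ m →
      (u n : A) * (u m : A) = (u m : A) * (u n : A))
    (huv : ∀ n m, 1 ≤ n → n ≤ N → 1 ≤ m → m ≤ N → n ≠ m →
      (u n : A) * (v m : A) = (v m : A) * (u n : A))
    (hvv : ∀ n m, 1 ≤ n → n ≤ N → 1 ≤ m → m ≤ N → n ≠ m →
      (v n : A) * (v m : A) = (v m : A) * (v n : A)) :
    ∃ h : ℕ → A,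
      (∀ z : ℂ, z ≠ 0 →
        (((List.range N).map fun n => laxMatrix q g z (u (n + 1)) (v (n + 1))).reverse).prod 0 0
          = ∑ k ∈ Finset.range (N + 1), ((-1 : ℂ) ^ k * z ^ ((N : ℤ) - 2 * k)) • h k) ∧
      h 0 = 1 ∧
      h N = (((List.range N).map fun n => (v (n + 1) : A)).reverse).prod ∧
      h 1 = (∑ n ∈ Finset.range (N - 1),
          (1 + (q⁻¹ * g ^ 2) • ((u (n + 1) : A) * (↑(u (n + 2))⁻¹ : A))) * (v (n + 1) : A))
        + (v N : A) ∧
      h (N - 1) = (((List.range N).map fun n => (v (n + 1) : A)).reverse).prod *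
        ((↑(v 1)⁻¹ : A) + ∑ n ∈ Finset.range (N - 1),
          (1 + (q⁻¹ * g ^ 2) • ((u (n + 1) : A) * (↑(u (n + 2))⁻¹ : A))) *
            (↑(v (n + 2))⁻¹ : A)) := by
  
  obtain ⟨n, rfl⟩ : ∃ n, N = n + 1 := ⟨N - 1, (Nat.succ_pred_eq_of_pos hN).symm⟩
  refine ⟨(todaCoef q g u v (n+1)).1, fun z hz => (toda_gen q g u v z hz (n+1)).1,
    todaCoef_a_zero q g u v (n+1), a_top q g u v (n+1), ?_, ?_⟩
  · have h := a_one q g u v hq (n+1) huu n le_rfl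
    simp only [Nat.add_sub_cancel]
    exact h
  · have h := a_topm1 q g u v hq (n+1) hWeyl huu huv hvv n le_rfl
    simp only [Nat.add_sub_cancel]
    exact h
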